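/- For every real ν > 0, every real λ > −1/2, and every integer m ≥ 1, lim_{n→∞} Σ_{k=0}^n σ_{n,k}^(G,ν) · ( k(2n − k + 2λ − 1) / (4(n+λ−1)(n+λ)) )^m = Γ(ν + 1) Γ(m+1) / (4^m Γ(ν + m + 1)), where σ_{n,k}^(G,ν) = τ_n^(G,ν) σ_{n−k}^(G,ν) are the Gegenbauer summation weights. In particular, the Gegenbauer method (G,ν) produces the same limits Σ_{0,2m} for the ultraspherical recurrence coefficients as the Cesàro method (C,2ν). -/

import Mathlib

open Filter Polynomial Finset Topology

namespace Stmt13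

lemma lim_ratio (a b c : ℝ) (hc : c ≠ 0) :
    Tendsto (fun n : ℕ => ((n:ℝ)+a)/(c*(n:ℝ)+b)) atTop (𝓝 (1/c)) := by
  have hn : Tendsto (fun n : ℕ => (n:ℝ)) atTop atTop := tendsto_natCast_atTop_atTop
  have ha : Tendsto (fun n : ℕ => a/(n:ℝ)) atTop (𝓝 0) :=
    Tendsto.div_atTop tendsto_const_nhds hn
  have hb : Tendsto (fun n : ℕ => b/(n:ℝ)) atTop (𝓝 0) :=
    Tendsto.div_atTop tendsto_const_nhds hn
  have h1 : Tendsto (fun n : ℕ => (1 + a/(n:ℝ))/(c + b/(n:ℝ))) atTop (𝓝 (1/c)) := by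
    have := Tendsto.div ((tendsto_const_nhds (x := (1:ℝ))).add ha)
      ((tendsto_const_nhds (x := c)).add hb) (by simpa using hc)
    simp only [add_zero] at this
    exact this
  apply h1.congr'
  filter_upwards [eventually_ge_atTop 1] with n hn1
  have hn0 : (n:ℝ) ≠ 0 := by
    have : (1:ℝ) ≤ (n:ℝ) := by exact_mod_cast hn1
    linarith
  have h2 : (1 + a/(n:ℝ)) = ((n:ℝ)+a)/n := by field_simp
  have h3 : c + b/(n:ℝ) = (c*(n:ℝ)+b)/n := by field_simp
  rw [h2, h3]
  by_cases hy : c*(n:ℝ)+b = 0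
  · simp [hy]
  · field_simp

lemma Gpos {x : ℝ} (hx : 0 < x) : 0 < Real.Gamma x := Real.Gamma_pos_of_pos hx

noncomputable def A (β : ℝ) (j : ℕ) : ℝ := Real.Gamma ((j:ℝ)+β) / (Real.Gamma β * (j.factorial : ℝ))

lemma A_pos {β : ℝ} (hβ : 0 < β) (j : ℕ) : 0 < A β j := by
  apply div_pos (Gpos (by positivity))
  exact mul_pos (Gpos hβ) (by exact_mod_cast j.factorial_pos)

lemma Gamma_add_nat (x : ℝ) (hx : 0 < x) (d : ℕ) :
    Real.Gamma (x + d) = Real.Gamma x * ∏ t ∈ Finset.range d, (x + t) := by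
  induction d with
  | zero => simp
  | succ d ih =>
    have hxd : x + (d:ℝ) ≠ 0 := by positivity
    have : Real.Gamma (x + (d+1:ℕ)) = (x + d) * Real.Gamma (x + d) := by
      push_cast
      rw [show x + ((d:ℝ)+1) = (x + d) + 1 by ring, Real.Gamma_add_one hxd]
    rw [this, ih, Finset.prod_range_succ]
    ring

lemma hockey (β : ℝ) (hβ : 0 < β) (n : ℕ) :
    ∑ j ∈ Finset.range (n+1), A β j = A (β+1) n := by
  induction n with
  | zero =>
    have hG1 : Real.Gamma β ≠ 0 := ne_of_gt (Gpos hβ)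
    simp [A, Real.Gamma_add_one (ne_of_gt hβ)]
    rw [div_self hG1, mul_comm, div_self (by positivity)]
  | succ n ih =>
    rw [Finset.sum_range_succ, ih]
    have h1 : Real.Gamma ((n:ℝ) + 1 + (β+1)) = ((n:ℝ)+β+1) * Real.Gamma ((n:ℝ)+(β+1)) := by
      rw [show (n:ℝ) + 1 + (β+1) = ((n:ℝ)+(β+1))+1 by ring, Real.Gamma_add_one (by positivity)]
      ring
    have h2 : Real.Gamma ((n:ℝ) + 1 + β) = ((n:ℝ)+β) * Real.Gamma ((n:ℝ)+β) := by
      rw [show (n:ℝ) + 1 + β = ((n:ℝ)+β)+1 by ring, Real.Gamma_add_one (by positivity)]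
    have h3 : Real.Gamma (β+1) = β * Real.Gamma β := Real.Gamma_add_one (ne_of_gt hβ)
    have h4 : Real.Gamma ((n:ℝ)+(β+1)) = ((n:ℝ)+β) * Real.Gamma ((n:ℝ)+β) := by
      rw [show (n:ℝ)+(β+1) = ((n:ℝ)+β)+1 by ring, Real.Gamma_add_one (by positivity)]
    simp only [A]
    push_cast [Nat.factorial_succ]
    rw [h1, h2, h3, h4]
    have hG1 : Real.Gamma β ≠ 0 := ne_of_gt (Gpos hβ)
    have hG2 : Real.Gamma ((n:ℝ)+β) ≠ 0 := ne_of_gt (Gpos (by positivity))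
    have hf : ((n.factorial : ℝ)) ≠ 0 := by exact_mod_cast n.factorial_pos.ne'
    have hn1 : ((n:ℝ)+1) ≠ 0 := by positivity
    field_simp
    ring

lemma A_mul_prod (β : ℝ) (hβ : 0 < β) (d j : ℕ) :
    A β j * ∏ t ∈ Finset.range d, ((j:ℝ)+β+t) =
      (Real.Gamma (β+(d:ℝ)) / Real.Gamma β) * A (β+(d:ℝ)) j := by
  have h1 : Real.Gamma ((j:ℝ)+β+(d:ℝ)) = Real.Gamma ((j:ℝ)+β) * ∏ t ∈ Finset.range d, ((j:ℝ)+β+t) :=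
    Gamma_add_nat _ (by positivity) d
  simp only [A]
  rw [show (j:ℝ)+(β+(d:ℝ)) = (j:ℝ)+β+(d:ℝ) by ring, h1]
  have hG1 : Real.Gamma β ≠ 0 := ne_of_gt (Gpos hβ)
  have hG2 : Real.Gamma (β+(d:ℝ)) ≠ 0 := ne_of_gt (Gpos (by positivity))
  have hf : ((j.factorial : ℝ)) ≠ 0 := by exact_mod_cast j.factorial_pos.ne'
  field_simp

lemma lim_ratio' (a : ℝ) : Tendsto (fun n : ℕ => ((n:ℝ)+a)/(n:ℝ)) atTop (𝓝 1) := by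
  have := lim_ratio a 0 1 one_ne_zero
  simpa using this

noncomputable def tau (ν : ℝ) (n : ℕ) : ℝ :=
  Real.Gamma (2*ν+1) * (n.factorial : ℝ) / ((2*(n:ℝ)+2*ν) * Real.Gamma ((n:ℝ)+2*ν))

lemma tau_pos {ν : ℝ} (hν : 0 < ν) (n : ℕ) : 0 < tau ν n := by
  apply div_pos
  · exact mul_pos (Gpos (by positivity)) (by exact_mod_cast n.factorial_pos)
  · exact mul_pos (by positivity) (Gpos (by positivity))

lemma tendsto_term {ν : ℝ} (hν : 0 < ν) (d : ℕ) :
    Tendsto (fun n : ℕ => tau ν n * A (2*ν+(d:ℝ)+1) n / (n:ℝ)^d) atTop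
      (𝓝 (Real.Gamma (2*ν+1)/(2*Real.Gamma (2*ν+(d:ℝ)+1)))) := by
  have hg : Tendsto (fun n : ℕ => Real.Gamma (2*ν+1)/Real.Gamma (2*ν+(d:ℝ)+1) *
      ((((n:ℝ)+(2*ν+(d:ℝ)))/(2*(n:ℝ)+2*ν)) * ∏ t ∈ Finset.range d, (((n:ℝ)+2*ν+(t:ℝ))/((n:ℝ))))) atTop
      (𝓝 (Real.Gamma (2*ν+1)/Real.Gamma (2*ν+(d:ℝ)+1) * ((1/2) * ∏ t ∈ Finset.range d, (1:ℝ)))) := by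
    apply tendsto_const_nhds.mul
    apply Tendsto.mul (lim_ratio _ _ 2 two_ne_zero)
    apply tendsto_finset_prod
    intro t _
    have := lim_ratio' (2*ν+(t:ℝ))
    apply this.congr
    intro n; ring_nf
  have hgval : Real.Gamma (2*ν+1)/Real.Gamma (2*ν+(d:ℝ)+1) * ((1/2) * ∏ t ∈ Finset.range d, (1:ℝ))
      = Real.Gamma (2*ν+1)/(2*Real.Gamma (2*ν+(d:ℝ)+1)) := by
    simp; ring
  rw [hgval] at hg
  apply hg.congr'
  filter_upwards [eventually_ge_atTop 1] with n hn1
  have hn0 : (n:ℝ) ≠ 0 := by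
    have : (1:ℝ) ≤ (n:ℝ) := by exact_mod_cast hn1
    linarith
  have hGam : Real.Gamma ((n:ℝ) + (2*ν+(d:ℝ)+1)) =
      Real.Gamma ((n:ℝ)+2*ν) * ((∏ t ∈ Finset.range d, ((n:ℝ)+2*ν+(t:ℝ))) * ((n:ℝ)+2*ν+(d:ℝ))) := by
    have := Gamma_add_nat ((n:ℝ)+2*ν) (by positivity) (d+1)
    rw [show (n:ℝ) + (2*ν+(d:ℝ)+1) = (n:ℝ)+2*ν + ((d+1 : ℕ):ℝ) by push_cast; ring, this,
      Finset.prod_range_succ]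
  simp only [tau, A]
  rw [hGam, Finset.prod_div_distrib, Finset.prod_const, Finset.card_range]
  have h1 : Real.Gamma ((n:ℝ)+2*ν) ≠ 0 := ne_of_gt (Gpos (by positivity))
  have h2 : Real.Gamma (2*ν+(d:ℝ)+1) ≠ 0 := ne_of_gt (Gpos (by positivity))
  have h3 : ((n.factorial : ℝ)) ≠ 0 := by exact_mod_cast n.factorial_pos.ne'
  have h4 : (2*(n:ℝ)+2*ν) ≠ 0 := by positivity
  field_simp
  ring

noncomputable def V (ν : ℝ) (d : ℕ) : Polynomial ℝ :=
  ∏ t ∈ Finset.range d, (Polynomial.X + Polynomial.C (2*ν + t))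

lemma V_monic (ν : ℝ) (d : ℕ) : (V ν d).Monic :=
  monic_prod_of_monic _ _ fun _ _ => monic_X_add_C _

lemma V_natDegree (ν : ℝ) (d : ℕ) : (V ν d).natDegree = d := by
  rw [V, Polynomial.natDegree_prod_of_monic _ _ fun _ _ => monic_X_add_C _]
  simp only [Polynomial.natDegree_X_add_C, Finset.sum_const, smul_eq_mul, mul_one,
    Finset.card_range]

lemma V_coeff_top (ν : ℝ) (d : ℕ) : (V ν d).coeff d = 1 := by
  have := (V_monic ν d).coeff_natDegree
  rwa [V_natDegree] at this

lemma V_eval (ν : ℝ) (d : ℕ) (x : ℝ) :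
    (V ν d).eval x = ∏ t ∈ Finset.range d, (x + 2*ν + (t:ℝ)) := by
  rw [V, Polynomial.eval_prod]
  apply Finset.prod_congr rfl
  intro t _
  simp; ring

lemma limA {ν : ℝ} (hν : 0 < ν) : ∀ (d : ℕ) (p : Polynomial ℝ), p.natDegree ≤ d →
    Tendsto (fun n : ℕ => tau ν n * (∑ j ∈ Finset.range (n+1), A (2*ν) j * p.eval (j:ℝ)) / (n:ℝ)^d)
      atTop (𝓝 (p.coeff d * (ν/(2*ν+(d:ℝ))))) := by
  intro d
  induction d with
  | zero =>
    intro p hp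
    rw [Polynomial.eq_C_of_natDegree_le_zero hp]
    have hsum : ∀ n : ℕ, (∑ j ∈ Finset.range (n+1), A (2*ν) j * (Polynomial.C (p.coeff 0)).eval (j:ℝ))
        = p.coeff 0 * A (2*ν+1) n := by
      intro n
      rw [← hockey (2*ν) (by positivity) n, Finset.mul_sum]
      apply Finset.sum_congr rfl
      intro j _
      simp [mul_comm]
    have h0 := tendsto_term hν 0
    simp only [Nat.cast_zero, add_zero, pow_zero] at h0 ⊢
    have h1 := h0.const_mul (p.coeff 0)
    have hG : Real.Gamma (2*ν+1) ≠ 0 := ne_of_gt (Gpos (by positivity))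
    have hc1 : p.coeff 0 * (Real.Gamma (2*ν+1) / (2 * Real.Gamma (2*ν+1)))
        = (Polynomial.C (p.coeff 0)).coeff 0 * (ν / (2*ν)) := by
      rw [Polynomial.coeff_C_zero]
      congr 1
      rw [div_eq_div_iff (by positivity) (by positivity)]
      ring
    rw [hc1] at h1
    apply h1.congr
    intro n
    rw [hsum n]
    ring
  | succ d ih =>
    intro p hp
    set cd := p.coeff (d+1) with hcd
    set q := p - Polynomial.C cd * V ν (d+1) with hqdef
    have hVdeg : (V ν (d+1)).natDegree = d+1 := V_natDegree ν (d+1)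
    have hq : q.natDegree ≤ d := by
      rw [Polynomial.natDegree_le_iff_coeff_eq_zero]
      intro N hN
      rw [hqdef, Polynomial.coeff_sub, Polynomial.coeff_C_mul]
      rcases eq_or_lt_of_le (Nat.succ_le_of_lt hN) with h | h
      · rw [← h, V_coeff_top, mul_one, hcd, sub_self]
      · rw [Polynomial.coeff_eq_zero_of_natDegree_lt (lt_of_le_of_lt hp h),
          Polynomial.coeff_eq_zero_of_natDegree_lt (by rw [hVdeg]; exact h), mul_zero, sub_zero]
    -- sum splitting
    have hsplit : ∀ n : ℕ, (∑ j ∈ Finset.range (n+1), A (2*ν) j * p.eval (j:ℝ))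
        = cd * ((Real.Gamma (2*ν+((d+1:ℕ):ℝ))/Real.Gamma (2*ν)) * A (2*ν+((d+1:ℕ):ℝ)+1) n)
          + ∑ j ∈ Finset.range (n+1), A (2*ν) j * q.eval (j:ℝ) := by
      intro n
      have hβ : (0:ℝ) < 2*ν+((d+1:ℕ):ℝ) := by positivity
      have key : ∀ j : ℕ, A (2*ν) j * p.eval (j:ℝ)
          = cd * ((Real.Gamma (2*ν+((d+1:ℕ):ℝ))/Real.Gamma (2*ν)) * A (2*ν+((d+1:ℕ):ℝ)) j)
            + A (2*ν) j * q.eval (j:ℝ) := by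
        intro j
        have hv := A_mul_prod (2*ν) (by positivity) (d+1) j
        have hev : p.eval (j:ℝ) = cd * (V ν (d+1)).eval (j:ℝ) + q.eval (j:ℝ) := by
          simp [hqdef]
        rw [hev, V_eval]
        have hAP : A (2*ν) j * ∏ t ∈ Finset.range (d+1), ((j:ℝ) + 2*ν + (t:ℝ))
            = Real.Gamma (2*ν+((d+1:ℕ):ℝ)) / Real.Gamma (2*ν) * A (2*ν+((d+1:ℕ):ℝ)) j := by
          rw [← hv]
        have expand : A (2*ν) j * (cd * (∏ t ∈ Finset.range (d+1), ((j:ℝ) + 2*ν + (t:ℝ))) + q.eval (j:ℝ))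
            = cd * (A (2*ν) j * ∏ t ∈ Finset.range (d+1), ((j:ℝ) + 2*ν + (t:ℝ)))
              + A (2*ν) j * q.eval (j:ℝ) := by ring
        rw [expand, hAP]
      rw [Finset.sum_congr rfl (fun j _ => key j), Finset.sum_add_distrib, ← Finset.mul_sum,
        ← Finset.mul_sum, hockey _ hβ n]
    have h1 := (tendsto_term hν (d+1)).const_mul (cd * (Real.Gamma (2*ν+((d+1:ℕ):ℝ))/Real.Gamma (2*ν)))
    have h20 : Tendsto (fun n : ℕ => 1/(n:ℝ)) atTop (𝓝 0) := tendsto_one_div_atTop_nhds_zero_nat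
    have h2 := (ih q hq).mul h20
    rw [mul_zero] at h2
    have hsum := h1.add h2
    rw [add_zero] at hsum
    have hconst : cd * (Real.Gamma (2*ν+((d+1:ℕ):ℝ))/Real.Gamma (2*ν))
        * (Real.Gamma (2*ν+1)/(2*Real.Gamma (2*ν+((d+1:ℕ):ℝ)+1)))
        = p.coeff (d+1) * (ν/(2*ν+((d+1:ℕ):ℝ))) := by
      rw [← hcd]
      have e1 : Real.Gamma (2*ν+1) = 2*ν * Real.Gamma (2*ν) := Real.Gamma_add_one (by positivity)
      have e2 : Real.Gamma (2*ν+((d+1:ℕ):ℝ)+1) = (2*ν+((d+1:ℕ):ℝ)) * Real.Gamma (2*ν+((d+1:ℕ):ℝ)) :=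
        Real.Gamma_add_one (by positivity)
      rw [e1, e2]
      have g1 : Real.Gamma (2*ν) ≠ 0 := ne_of_gt (Gpos (by positivity))
      have g2 : Real.Gamma (2*ν+((d+1:ℕ):ℝ)) ≠ 0 := ne_of_gt (Gpos (by positivity))
      have g3 : (2*ν+((d+1:ℕ):ℝ)) ≠ 0 := by positivity
      field_simp
    rw [hconst] at hsum
    apply hsum.congr
    intro n
    rw [hsplit n]
    have e3 : tau ν n * (∑ j ∈ Finset.range (n+1), A (2*ν) j * q.eval (j:ℝ)) / (n:ℝ)^(d+1)
        = tau ν n * (∑ j ∈ Finset.range (n+1), A (2*ν) j * q.eval (j:ℝ)) / (n:ℝ)^d * (1/(n:ℝ)) := by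
      rw [pow_succ, ← div_div, div_eq_mul_one_div]
    rw [mul_add, add_div, e3]
    ring

noncomputable def B (ν : ℝ) (j : ℕ) : ℝ := if j = 0 then 0 else A (2*ν) (j-1)

lemma tau_ratio {ν : ℝ} (hν : 0 < ν) :
    Tendsto (fun n : ℕ => tau ν n / tau ν (n-1)) atTop (𝓝 1) := by
  have base := (lim_ratio 0 (2*ν-1) 1 one_ne_zero).mul (lim_ratio (ν-1) ν 1 one_ne_zero)
  have hval : (1/1 : ℝ) * (1/1) = 1 := by norm_num
  rw [hval] at base
  apply base.congr'
  filter_upwards [eventually_ge_atTop 2] with n hn1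
  obtain ⟨k, rfl⟩ := Nat.exists_eq_succ_of_ne_zero (by omega : n ≠ 0)
  have hk1 : (1:ℝ) ≤ (k:ℝ) := by exact_mod_cast (by omega : 1 ≤ k)
  simp only [Nat.succ_sub_one, tau]
  have e1 : ((k+1:ℕ):ℝ) = (k:ℝ)+1 := by push_cast; ring
  have e2 : ((k+1).factorial : ℝ) = ((k:ℝ)+1) * (k.factorial : ℝ) := by
    rw [Nat.factorial_succ]; push_cast; ring
  have e3 : Real.Gamma ((((k+1:ℕ)):ℝ) + 2*ν) = ((k:ℝ)+2*ν) * Real.Gamma ((k:ℝ)+2*ν) := by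
    rw [e1, show (k:ℝ)+1+2*ν = ((k:ℝ)+2*ν)+1 by ring, Real.Gamma_add_one (by positivity)]
  rw [e3, e2, e1]
  have g1 : Real.Gamma ((k:ℝ)+2*ν) ≠ 0 := ne_of_gt (Gpos (by positivity))
  have g2 : Real.Gamma (2*ν+1) ≠ 0 := ne_of_gt (Gpos (by positivity))
  have g3 : ((k.factorial:ℝ)) ≠ 0 := by exact_mod_cast k.factorial_pos.ne'
  have g4 : (2*(k:ℝ)+2*ν) ≠ 0 := by positivity
  have g5 : (2*((k:ℝ)+1)+2*ν) ≠ 0 := by positivity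
  have g6 : ((k:ℝ)+2*ν) ≠ 0 := by positivity
  have g7 : (1*(k:ℝ)+(2*ν-1)) ≠ 0 := by nlinarith
  field_simp
  rw [show (k:ℝ)+1+(2*ν-1) = (k:ℝ)+2*ν by ring, mul_div_assoc, div_self g6]
  ring

lemma coeff_comp_X_add_one (p : Polynomial ℝ) (d : ℕ) (hp : p.natDegree ≤ d) :
    (p.comp (Polynomial.X + Polynomial.C 1)).coeff d = p.coeff d := by
  have hdeg : (p.comp (Polynomial.X + Polynomial.C 1)).natDegree = p.natDegree := by
    rw [Polynomial.natDegree_comp, Polynomial.natDegree_X_add_C, mul_one]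
  rcases eq_or_lt_of_le hp with h | h
  · rw [← h, ← Polynomial.leadingCoeff, ← hdeg, ← Polynomial.leadingCoeff,
      Polynomial.leadingCoeff_comp (by rw [Polynomial.natDegree_X_add_C]; norm_num)]
    rw [(Polynomial.monic_X_add_C (1:ℝ)).leadingCoeff, one_pow, mul_one]
  · rw [Polynomial.coeff_eq_zero_of_natDegree_lt (by rw [hdeg]; exact h),
      Polynomial.coeff_eq_zero_of_natDegree_lt h]

lemma limB {ν : ℝ} (hν : 0 < ν) (d : ℕ) (p : Polynomial ℝ) (hp : p.natDegree ≤ d) :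
    Tendsto (fun n : ℕ => tau ν n * (∑ j ∈ Finset.range (n+1), B ν j * p.eval (j:ℝ)) / (n:ℝ)^d)
      atTop (𝓝 (p.coeff d * (ν/(2*ν+(d:ℝ))))) := by
  set p' := p.comp (Polynomial.X + Polynomial.C 1) with hp'def
  have hp'deg : p'.natDegree ≤ d := by
    rw [hp'def, Polynomial.natDegree_comp, Polynomial.natDegree_X_add_C, mul_one]; exact hp
  have hL := limA hν d p' hp'deg
  rw [coeff_comp_X_add_one p d hp] at hL
  have hcomp := hL.comp (tendsto_sub_atTop_nat 1)
  have hr1 := tau_ratio hν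
  have hr2 : Tendsto (fun n : ℕ => (((n-1:ℕ):ℝ)/(n:ℝ))^d) atTop (𝓝 1) := by
    have hb : Tendsto (fun n : ℕ => ((n-1:ℕ):ℝ)/(n:ℝ)) atTop (𝓝 1) := by
      have := lim_ratio' (-1)
      apply this.congr'
      filter_upwards [eventually_ge_atTop 1] with n hn1
      have : ((n-1:ℕ):ℝ) = (n:ℝ) - 1 := by
        have : (1:ℕ) ≤ n := hn1
        push_cast [Nat.cast_sub this]
        ring
      rw [this]; ring_nf
    have := hb.pow d
    simpa using this
  have hfin := (hcomp.mul hr1).mul hr2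
  rw [mul_one, mul_one] at hfin
  apply hfin.congr'
  filter_upwards [eventually_ge_atTop 2] with n hn2
  have hn1 : 1 ≤ n := by omega
  -- sum identity
  have hsum : ∑ j ∈ Finset.range (n-1+1+1), B ν j * p.eval (j:ℝ)
      = ∑ i ∈ Finset.range (n-1+1), A (2*ν) i * p'.eval (i:ℝ) := by
    rw [Finset.sum_range_succ']
    have h0 : B ν 0 * p.eval ((0:ℕ):ℝ) = 0 := by simp [B]
    rw [h0, add_zero]
    apply Finset.sum_congr rfl
    intro i _
    have hB : B ν (i+1) = A (2*ν) i := by simp [B]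
    have hev : p.eval (((i+1:ℕ)):ℝ) = p'.eval (i:ℝ) := by
      rw [hp'def, Polynomial.eval_comp]
      push_cast
      simp
    rw [hB, hev]
  have hne : n - 1 + 1 = n := by omega
  simp only [Function.comp]
  rw [hne] at hsum
  rw [hne, ← hsum]
  have htau : tau ν (n-1) ≠ 0 := ne_of_gt (tau_pos hν _)
  have hc : ((n-1:ℕ):ℝ) = (n:ℝ)-1 := by
    push_cast [Nat.cast_sub hn1]; ring
  rw [hc]
  have hpow : ((n:ℝ)-1)^d ≠ 0 := by
    have h2 : (2:ℝ) ≤ (n:ℝ) := by exact_mod_cast hn2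
    have : (n:ℝ)-1 ≠ 0 := by linarith
    positivity
  have hn0 : (n:ℝ) ≠ 0 := by
    have h2 : (2:ℝ) ≤ (n:ℝ) := by exact_mod_cast hn2
    linarith
  rw [div_pow]
  field_simp

lemma sigma_eq {ν : ℝ} (hν : 0 < ν) (σG : ℕ → ℝ) (hσG0 : σG 0 = 1)
    (hσG : ∀ j : ℕ, 1 ≤ j → σG j =
      (2*(j:ℝ)+2*ν-1) * Real.Gamma ((j:ℝ)+2*ν-1) /
        (Real.Gamma (2*ν) * Real.Gamma ((j:ℝ)+1))) (j : ℕ) :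
    σG j = A (2*ν) j + B ν j := by
  cases j with
  | zero =>
    simp [hσG0, A, B]
    rw [div_self (ne_of_gt (Gpos (by positivity : (0:ℝ) < 2*ν)))]
  | succ k =>
    rw [hσG (k+1) (by omega)]
    simp only [B, Nat.succ_ne_zero, if_false, Nat.succ_sub_one, A]
    have e0 : (((k+1:ℕ)):ℝ) = (k:ℝ)+1 := by push_cast; ring
    have e1 : Real.Gamma ((((k+1:ℕ)):ℝ)+2*ν-1) = Real.Gamma ((k:ℝ)+2*ν) := by
      rw [e0]; congr 1; ring
    have e2 : Real.Gamma ((((k+1:ℕ)):ℝ)+1) = ((k+1).factorial : ℝ) := Real.Gamma_nat_eq_factorial (k+1)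
    have e3 : Real.Gamma ((((k+1:ℕ)):ℝ)+2*ν) = ((k:ℝ)+2*ν) * Real.Gamma ((k:ℝ)+2*ν) := by
      rw [e0, show (k:ℝ)+1+2*ν = ((k:ℝ)+2*ν)+1 by ring, Real.Gamma_add_one (by positivity)]
    rw [e1, e2, e3, e0]
    have e4 : (((k+1).factorial : ℕ):ℝ) = ((k:ℝ)+1) * (k.factorial : ℝ) := by
      rw [Nat.factorial_succ]; push_cast; ring
    rw [e4]
    have g1 : Real.Gamma (2*ν) ≠ 0 := ne_of_gt (Gpos (by positivity))
    have g2 : Real.Gamma ((k:ℝ)+2*ν) ≠ 0 := ne_of_gt (Gpos (by positivity))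
    have g3 : ((k.factorial:ℝ)) ≠ 0 := by exact_mod_cast k.factorial_pos.ne'
    have g4 : ((k:ℝ)+1) ≠ 0 := by positivity
    field_simp
    ring

lemma limSigma {ν : ℝ} (hν : 0 < ν) (σG : ℕ → ℝ) (hσG0 : σG 0 = 1)
    (hσG : ∀ j : ℕ, 1 ≤ j → σG j =
      (2*(j:ℝ)+2*ν-1) * Real.Gamma ((j:ℝ)+2*ν-1) /
        (Real.Gamma (2*ν) * Real.Gamma ((j:ℝ)+1)))
    (d : ℕ) (p : Polynomial ℝ) (hp : p.natDegree ≤ d) :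
    Tendsto (fun n : ℕ => tau ν n * (∑ j ∈ Finset.range (n+1), σG j * p.eval (j:ℝ)) / (n:ℝ)^d)
      atTop (𝓝 (p.coeff d * (2*ν/(2*ν+(d:ℝ))))) := by
  have h := (limA hν d p hp).add (limB hν d p hp)
  have hval : p.coeff d * (ν/(2*ν+(d:ℝ))) + p.coeff d * (ν/(2*ν+(d:ℝ)))
      = p.coeff d * (2*ν/(2*ν+(d:ℝ))) := by ring
  rw [hval] at h
  apply h.congr
  intro n
  have : ∑ j ∈ Finset.range (n+1), σG j * p.eval (j:ℝ)
      = (∑ j ∈ Finset.range (n+1), A (2*ν) j * p.eval (j:ℝ))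
        + ∑ j ∈ Finset.range (n+1), B ν j * p.eval (j:ℝ) := by
    rw [← Finset.sum_add_distrib]
    apply Finset.sum_congr rfl
    intro j _
    rw [sigma_eq hν σG hσG0 hσG j]
    ring
  rw [this]
  ring

lemma beta_sum : ∀ (m : ℕ) (x : ℝ), 0 < x →
    ∑ i ∈ Finset.range (m+1), (-1:ℝ)^i * (m.choose i : ℝ) / (x+(i:ℝ))
      = (m.factorial : ℝ) * Real.Gamma x / Real.Gamma (x+(m:ℝ)+1) := by
  intro m
  induction m with
  | zero =>
    intro x hx
    rw [Finset.sum_range_one]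
    have hG : Real.Gamma (x+((0:ℕ):ℝ)+1) = x * Real.Gamma x := by
      rw [show x+((0:ℕ):ℝ)+1 = x+1 by push_cast; ring, Real.Gamma_add_one (ne_of_gt hx)]
    rw [hG]
    norm_num
    field_simp
  | succ m ih =>
    intro x hx
    have step : ∑ i ∈ Finset.range (m+2), (-1:ℝ)^i * ((m+1).choose i : ℝ) / (x+(i:ℝ))
        = (∑ i ∈ Finset.range (m+1), (-1:ℝ)^i * (m.choose i : ℝ) / (x+(i:ℝ)))
          - ∑ i ∈ Finset.range (m+1), (-1:ℝ)^i * (m.choose i : ℝ) / ((x+1)+(i:ℝ)) := by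
      rw [Finset.sum_range_succ' (fun i => (-1:ℝ)^i * ((m+1).choose i : ℝ) / (x+(i:ℝ))) (m+1),
        Finset.sum_range_succ' (fun i => (-1:ℝ)^i * ((m).choose i : ℝ) / (x+(i:ℝ))) m]
      have hsplit : ∀ i : ℕ, (-1:ℝ)^(i+1) * (((m+1).choose (i+1)) : ℝ) / (x+((i+1:ℕ):ℝ))
          = (-1:ℝ)^(i+1) * ((m.choose (i+1)) : ℝ) / (x+((i+1:ℕ):ℝ))
            - (-1:ℝ)^i * ((m.choose i) : ℝ) / ((x+1)+(i:ℝ)) := by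
        intro i
        rw [Nat.choose_succ_succ]
        push_cast
        rw [show x + ((i:ℝ)+1) = (x+1)+(i:ℝ) by ring]
        ring
      rw [Finset.sum_congr rfl (fun i _ => hsplit i)]
      rw [Finset.sum_sub_distrib]
      have hlast : ∑ i ∈ Finset.range (m+1), (-1:ℝ)^(i+1) * ((m.choose (i+1)) : ℝ) / (x+((i+1:ℕ):ℝ))
          = ∑ i ∈ Finset.range m, (-1:ℝ)^(i+1) * ((m.choose (i+1)) : ℝ) / (x+((i+1:ℕ):ℝ)) := by
        rw [Finset.sum_range_succ, Nat.choose_succ_self]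
        simp
      rw [hlast]
      simp
      ring
    rw [step, ih x hx, ih (x+1) (by positivity)]
    have e1 : Real.Gamma (x+1) = x * Real.Gamma x := Real.Gamma_add_one (ne_of_gt hx)
    have e2 : Real.Gamma (x+((m+1:ℕ):ℝ)+1) = (x+(m:ℝ)+1) * Real.Gamma (x+(m:ℝ)+1) := by
      rw [show x+((m+1:ℕ):ℝ)+1 = (x+(m:ℝ)+1)+1 by push_cast; ring,
        Real.Gamma_add_one (by positivity)]
    have e3 : Real.Gamma (x+1+(m:ℝ)+1) = (x+(m:ℝ)+1) * Real.Gamma (x+(m:ℝ)+1) := by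
      rw [show x+1+(m:ℝ)+1 = (x+(m:ℝ)+1)+1 by ring, Real.Gamma_add_one (by positivity)]
    rw [e2, e3, e1]
    have e4 : (((m+1).factorial : ℕ):ℝ) = ((m:ℝ)+1) * (m.factorial : ℝ) := by
      rw [Nat.factorial_succ]; push_cast; ring
    rw [e4]
    have g1 : Real.Gamma (x+(m:ℝ)+1) ≠ 0 := ne_of_gt (Gpos (by positivity))
    have g2 : (x+(m:ℝ)+1) ≠ 0 := by positivity
    field_simp
    ring

lemma final_const {ν : ℝ} (hν : 0 < ν) (m : ℕ) :
    ∑ i ∈ Finset.range (m+1),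
      (2*ν/(2*ν+((2*i:ℕ):ℝ))) * ((1/4:ℝ)^(m-i) * (1/4:ℝ)^i * (((m.choose i):ℝ) * (-1)^i))
      = Real.Gamma (ν+1) * Real.Gamma ((m:ℝ)+1) / (4^m * Real.Gamma (ν+(m:ℝ)+1)) := by
  have step : ∀ i ∈ Finset.range (m+1),
      (2*ν/(2*ν+((2*i:ℕ):ℝ))) * ((1/4:ℝ)^(m-i) * (1/4:ℝ)^i * (((m.choose i):ℝ) * (-1)^i))
      = ((1/4:ℝ)^m * ν) * ((-1:ℝ)^i * ((m.choose i):ℝ) / (ν+(i:ℝ))) := by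
    intro i hi
    have hi' : i ≤ m := by
      have := Finset.mem_range.mp hi; omega
    have hpow : (1/4:ℝ)^(m-i) * (1/4:ℝ)^i = (1/4:ℝ)^m := by
      rw [← pow_add, Nat.sub_add_cancel hi']
    have hfrac : 2*ν/(2*ν+((2*i:ℕ):ℝ)) = ν/(ν+(i:ℝ)) := by
      push_cast
      rw [div_eq_div_iff (by positivity) (by positivity)]
      ring
    rw [hfrac]
    rw [show (1/4:ℝ)^(m-i) * (1/4:ℝ)^i * (((m.choose i):ℝ) * (-1)^i)
      = ((1/4:ℝ)^(m-i) * (1/4:ℝ)^i) * (((m.choose i):ℝ) * (-1)^i) by ring, hpow]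
    have hne : (ν+(i:ℝ)) ≠ 0 := by positivity
    field_simp
  rw [Finset.sum_congr rfl step, ← Finset.mul_sum, beta_sum m ν hν]
  have e1 : Real.Gamma (ν+1) = ν * Real.Gamma ν := Real.Gamma_add_one (ne_of_gt hν)
  have e2 : Real.Gamma ((m:ℝ)+1) = (m.factorial : ℝ) := Real.Gamma_nat_eq_factorial m
  rw [e1, e2]
  have g1 : Real.Gamma (ν+(m:ℝ)+1) ≠ 0 := ne_of_gt (Gpos (by positivity))
  have g4 : (4:ℝ)^m ≠ 0 := by positivity
  rw [show ((1/4:ℝ)^m = 1/4^m) by rw [div_pow]; norm_num]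
  field_simp

end Stmt13

theorem stmt13 (ν : ℝ) (hν : 0 < ν) (lam : ℝ) (hlam : -(1/2) < lam)
    (m : ℕ) (hm : 1 ≤ m)
    (σG : ℕ → ℝ) (hσG0 : σG 0 = 1)
    (hσG : ∀ j : ℕ, 1 ≤ j → σG j =
      (2*(j:ℝ)+2*ν-1) * Real.Gamma ((j:ℝ)+2*ν-1) /
        (Real.Gamma (2*ν) * Real.Gamma ((j:ℝ)+1)))
    (τG : ℕ → ℝ) (hτG : ∀ n : ℕ, τG n =
      Real.Gamma (2*ν+1) * Real.Gamma ((n:ℝ)+1) /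
        ((2*(n:ℝ)+2*ν) * Real.Gamma ((n:ℝ)+2*ν)))
    :
    Filter.Tendsto (fun n : ℕ => ∑ k ∈ Finset.range (n+1),
      τG n * σG (n-k) *
      (((k:ℝ) * (2*(n:ℝ) - (k:ℝ) + 2*lam - 1)) / (4*((n:ℝ)+lam-1)*((n:ℝ)+lam)))^m)
      Filter.atTop
      (nhds (Real.Gamma (ν+1) * Real.Gamma ((m:ℝ)+1) / (4^m * Real.Gamma (ν+(m:ℝ)+1)))) := by
  classical
  set q : ℕ → Polynomial ℝ := fun i => (Polynomial.X + Polynomial.C (lam - 1/2))^(2*i) with hq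
  have hqdeg : ∀ i, (q i).natDegree = 2*i := by
    intro i
    rw [hq]
    simp only [Polynomial.natDegree_pow, Polynomial.natDegree_X_add_C, mul_one]
  have hqcoeff : ∀ i, (q i).coeff (2*i) = 1 := by
    intro i
    have hmon : (q i).Monic := (Polynomial.monic_X_add_C (lam-1/2)).pow (2*i)
    have := hmon.coeff_natDegree
    rwa [hqdeg i] at this
  have hqeval : ∀ (i : ℕ) (x : ℝ), (q i).eval x = (x + (lam-1/2))^(2*i) := by
    intro i x; rw [hq]; simp
  have hτ : ∀ N : ℕ, τG N = Stmt13.tau ν N := by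
    intro N
    rw [hτG N, Stmt13.tau, Real.Gamma_nat_eq_factorial]
  -- limits for each i
  have hGlim : ∀ i : ℕ, Filter.Tendsto (fun n : ℕ => Stmt13.tau ν n *
      (∑ j ∈ Finset.range (n+1), σG j * (q i).eval (j:ℝ)) / (n:ℝ)^(2*i))
      Filter.atTop (nhds (2*ν/(2*ν+((2*i:ℕ):ℝ)))) := by
    intro i
    have h := Stmt13.limSigma hν σG hσG0 hσG (2*i) (q i) (le_of_eq (hqdeg i))
    rwa [hqcoeff i, one_mul] at h
  have hquarter1 : Filter.Tendsto (fun n : ℕ =>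
      ((n:ℝ)+lam-1/2)^2/(4*((n:ℝ)+lam-1)*((n:ℝ)+lam))) Filter.atTop (nhds (1/4)) := by
    have h := (Stmt13.lim_ratio (lam-1/2) (2*lam-2) 2 two_ne_zero).mul
      (Stmt13.lim_ratio (lam-1/2) (2*lam) 2 two_ne_zero)
    have hv : (1/2 : ℝ) * (1/2) = 1/4 := by norm_num
    rw [hv] at h
    apply h.congr
    intro n
    rw [div_mul_div_comm]
    congr 1 <;> ring
  have hquarter2 : Filter.Tendsto (fun n : ℕ =>
      ((n:ℝ))^2/(4*((n:ℝ)+lam-1)*((n:ℝ)+lam))) Filter.atTop (nhds (1/4)) := by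
    have h := (Stmt13.lim_ratio 0 (2*lam-2) 2 two_ne_zero).mul
      (Stmt13.lim_ratio 0 (2*lam) 2 two_ne_zero)
    have hv : (1/2 : ℝ) * (1/2) = 1/4 := by norm_num
    rw [hv] at h
    apply h.congr
    intro n
    rw [div_mul_div_comm]
    congr 1 <;> ring
  have hterm : ∀ i ∈ Finset.range (m+1), Filter.Tendsto (fun n : ℕ =>
      (Stmt13.tau ν n * (∑ j ∈ Finset.range (n+1), σG j * (q i).eval (j:ℝ)) / (n:ℝ)^(2*i)) *
      ((((n:ℝ)+lam-1/2)^2/(4*((n:ℝ)+lam-1)*((n:ℝ)+lam)))^(m-i) *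
        (((n:ℝ))^2/(4*((n:ℝ)+lam-1)*((n:ℝ)+lam)))^i * (((m.choose i):ℝ) * (-1)^i)))
      Filter.atTop
      (nhds ((2*ν/(2*ν+((2*i:ℕ):ℝ))) * ((1/4:ℝ)^(m-i) * (1/4:ℝ)^i * (((m.choose i):ℝ) * (-1)^i)))) := by
    intro i _
    exact (hGlim i).mul (((hquarter1.pow (m-i)).mul (hquarter2.pow i)).mul tendsto_const_nhds)
  have hsumlim := tendsto_finset_sum (Finset.range (m+1)) hterm
  rw [Stmt13.final_const hν m] at hsumlim
  apply hsumlim.congr'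
  filter_upwards [Filter.eventually_ge_atTop 2] with n hn2
  -- notation
  have hnR : (2:ℝ) ≤ (n:ℝ) := by exact_mod_cast hn2
  have hn0 : (n:ℝ) ≠ 0 := by linarith
  have hD1 : (0:ℝ) < (n:ℝ)+lam-1 := by linarith
  have hD2 : (0:ℝ) < (n:ℝ)+lam := by linarith
  have hD : (4*((n:ℝ)+lam-1)*((n:ℝ)+lam)) ≠ 0 := by positivity
  -- step 1 : reflect and rewrite
  have step1 : ∑ i ∈ Finset.range (m+1),
      (Stmt13.tau ν n * (∑ j ∈ Finset.range (n+1), σG j * (q i).eval (j:ℝ)) / (n:ℝ)^(2*i)) *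
      ((((n:ℝ)+lam-1/2)^2/(4*((n:ℝ)+lam-1)*((n:ℝ)+lam)))^(m-i) *
        (((n:ℝ))^2/(4*((n:ℝ)+lam-1)*((n:ℝ)+lam)))^i * (((m.choose i):ℝ) * (-1)^i))
      = ∑ j ∈ Finset.range (n+1), ∑ i ∈ Finset.range (m+1),
        Stmt13.tau ν n * σG j *
          ((-((((j:ℝ)+(lam-1/2))^2)/(4*((n:ℝ)+lam-1)*((n:ℝ)+lam))))^i *
            ((((n:ℝ)+lam-1/2)^2/(4*((n:ℝ)+lam-1)*((n:ℝ)+lam)))^(m-i) * ((m.choose i : ℕ):ℝ))) := by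
    rw [Finset.sum_comm]
    apply Finset.sum_congr rfl
    intro i hi
    have key : ∀ j : ℕ, Stmt13.tau ν n * σG j *
        ((-((((j:ℝ)+(lam-1/2))^2)/(4*((n:ℝ)+lam-1)*((n:ℝ)+lam))))^i *
          ((((n:ℝ)+lam-1/2)^2/(4*((n:ℝ)+lam-1)*((n:ℝ)+lam)))^(m-i) * ((m.choose i : ℕ):ℝ)))
        = (σG j * (q i).eval (j:ℝ)) *
          (Stmt13.tau ν n * ((-1:ℝ)^i * ((((n:ℝ)+lam-1/2)^2/(4*((n:ℝ)+lam-1)*((n:ℝ)+lam)))^(m-i)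
            * ((m.choose i : ℕ):ℝ) / (4*((n:ℝ)+lam-1)*((n:ℝ)+lam))^i))) := by
      intro j
      rw [hqeval i (j:ℝ), neg_pow, div_pow, ← pow_mul]
      field_simp
    rw [Finset.sum_congr rfl (fun j _ => key j), ← Finset.sum_mul]
    rw [div_pow ((n:ℝ)^2), ← pow_mul]
    have hpow2 : ((n:ℝ)^2)^i = (n:ℝ)^(2*i) := by rw [← pow_mul]
    field_simp
  rw [step1]
  have refl := (Finset.sum_range_reflect (fun k => τG n * σG (n-k) *
      (((k:ℝ) * (2*(n:ℝ) - (k:ℝ) + 2*lam - 1)) / (4*((n:ℝ)+lam-1)*((n:ℝ)+lam)))^m) (n+1)).symm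
  simp only [Nat.add_sub_cancel] at refl
  rw [refl]
  apply Finset.sum_congr rfl
  intro j hj
  have hjn : j ≤ n := by
    have := Finset.mem_range.mp hj; omega
  rw [Nat.sub_sub_self hjn, hτ n]
  have hcast : ((n-j:ℕ):ℝ) = (n:ℝ)-(j:ℝ) := by
    push_cast [Nat.cast_sub hjn]; ring
  rw [hcast]
  have hbase : (((n:ℝ)-(j:ℝ)) * (2*(n:ℝ) - ((n:ℝ)-(j:ℝ)) + 2*lam - 1)) /
      (4*((n:ℝ)+lam-1)*((n:ℝ)+lam))
      = -((((j:ℝ)+(lam-1/2))^2)/(4*((n:ℝ)+lam-1)*((n:ℝ)+lam)))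
        + (((n:ℝ)+lam-1/2)^2)/(4*((n:ℝ)+lam-1)*((n:ℝ)+lam)) := by
    have h1 : -((((j:ℝ)+(lam-1/2))^2)/(4*((n:ℝ)+lam-1)*((n:ℝ)+lam)))
        + (((n:ℝ)+lam-1/2)^2)/(4*((n:ℝ)+lam-1)*((n:ℝ)+lam))
        = ((((n:ℝ)+lam-1/2)^2) - (((j:ℝ)+(lam-1/2))^2))/(4*((n:ℝ)+lam-1)*((n:ℝ)+lam)) := by
      ring
    rw [h1]
    congr 1
    ring
  rw [hbase, add_pow (-((((j:ℝ)+(lam-1/2))^2)/(4*((n:ℝ)+lam-1)*((n:ℝ)+lam))))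
    ((((n:ℝ)+lam-1/2)^2)/(4*((n:ℝ)+lam-1)*((n:ℝ)+lam))) m, Finset.mul_sum]
  apply Finset.sum_congr rfl
  intro i hi
  ring
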